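/- Let A be an n×n matrix that is either positive definite Hermitian or nonsingular totally nonnegative, λ a partition of m, and μ a weak composition of m into n parts with corresponding multiset I. If the Kostka number K_{λμ} (the number of semistandard Young tableaux of shape λ and content μ) is zero, then Imm_{χ^λ}(A_I) = 0. -/

import Mathlib

open scoped Classical ComplexOrder Matrix

/-- A real square matrix is totally nonnegative if all of its minors are nonnegative. -/
def TotallyNonneg {n : ℕ} (A : Matrix (Fin n) (Fin n) ℝ) : Prop :=
  ∀ (k : ℕ) (r c : Fin k → Fin n), StrictMono r → StrictMono c →
    0 ≤ (A.submatrix r c).det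

/-- The λ-immanant of a complex `m × m` matrix with respect to a class function `χ`. -/
noncomputable def immanant {m : ℕ} (χ : Equiv.Perm (Fin m) → ℂ)
    (B : Matrix (Fin m) (Fin m) ℂ) : ℂ :=
  ∑ σ : Equiv.Perm (Fin m), χ σ * ∏ i, B (σ i) i

/-- The Young symmetrizer of a Young diagram `γ` with `m = γ.card` boxes, with respect to the
canonical identification of the cells of `γ` with `Fin γ.card`: the product of the sum of the
row-preserving permutations and the signed sum of the column-preserving permutations, in the
group algebra `ℂ[S_m]`. -/
noncomputable def youngSymmetrizer (γ : YoungDiagram) :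
    MonoidAlgebra ℂ (Equiv.Perm (Fin γ.card)) :=
  (∑ τ : Equiv.Perm (Fin γ.card),
      if ∀ r, (γ.cells.equivFin.symm (τ r)).1.1 = (γ.cells.equivFin.symm r).1.1 then
        MonoidAlgebra.single τ (1 : ℂ)
      else 0) *
  (∑ τ : Equiv.Perm (Fin γ.card),
      if ∀ r, (γ.cells.equivFin.symm (τ r)).1.2 = (γ.cells.equivFin.symm r).1.2 then
        MonoidAlgebra.single τ (((Equiv.Perm.sign τ : ℤ) : ℂ))
      else 0)

/-- The irreducible character `χ^λ` of the symmetric group `S_m` indexed by a partition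
(Young diagram) `λ = γ` of `m = γ.card`: if `y_λ` is the Young symmetrizer, then
`χ^λ(σ) = (f^λ / m!) · tr(x ↦ σ x y_λ)` on `ℂ[S_m]`, where
`f^λ = dim (ℂ[S_m] y_λ)` is the dimension of the corresponding Specht module. -/
noncomputable def youngChar (γ : YoungDiagram) (σ : Equiv.Perm (Fin γ.card)) : ℂ :=
  ((Module.finrank ℂ
      (LinearMap.range (LinearMap.mulRight ℂ (youngSymmetrizer γ))) : ℂ) /
    (Nat.factorial γ.card : ℂ)) *
  LinearMap.trace ℂ _
    ((LinearMap.mulLeft ℂ (MonoidAlgebra.single σ (1 : ℂ))) ∘ₗ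
      (LinearMap.mulRight ℂ (youngSymmetrizer γ)))

/-- The Kostka number `K_{λμ}`: the number of semistandard Young tableaux of shape `γ` with
entries in `{0, …, n-1}` (i.e. at most `n` values) and content `μ` (the entry `j` occurs
exactly `μ j` times).  It equals the dimension of the `μ`-weight space of the irreducible
polynomial `GL_n(ℂ)`-representation of highest weight `γ`. -/
noncomputable def kostkaNumber (γ : YoungDiagram) (n : ℕ) (μ : Fin n → ℕ) : ℕ :=
  Nat.card {T : SemistandardYoungTableau γ //
    (∀ c ∈ γ.cells, T c.1 c.2 < n) ∧
    ∀ j : Fin n, (γ.cells.filter fun c => T c.1 c.2 = (j : ℕ)).card = μ j}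

theorem Equiv.Perm.apply_inv_self {α : Type*} (f : Equiv.Perm α) (x : α) : f (f⁻¹ x) = x :=
  f.apply_symm_apply x

namespace ImmanantKostka

open Finset

variable (γ : YoungDiagram) (f : ℕ → ℕ → ℕ)

/-- number of entries `< k` in column `c` of the filling `f`. -/
noncomputable def hgt (c k : ℕ) : ℕ :=
  ((Finset.range (γ.colLen c)).filter fun i => f i c < k).card

/-- number of columns `c` with `hgt c k ≥ t`. -/
noncomputable def Nc (t k : ℕ) : ℕ :=
  ((Finset.range (γ.rowLen 0)).filter fun c => t ≤ hgt γ f c k).card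

variable {γ f}

lemma hgt_le (c k : ℕ) : hgt γ f c k ≤ γ.colLen c :=
  le_trans (Finset.card_filter_le _ _) (le_of_eq (Finset.card_range _))

lemma hgt_mono (c : ℕ) {k1 k2 : ℕ} (h : k1 ≤ k2) : hgt γ f c k1 ≤ hgt γ f c k2 :=
  Finset.card_le_card (Finset.monotone_filter_right _ fun i _ hi => lt_of_lt_of_le hi h)

lemma hgt_zero (c : ℕ) : hgt γ f c 0 = 0 := by simp [hgt]

lemma Nc_mono (t : ℕ) {k1 k2 : ℕ} (h : k1 ≤ k2) : Nc γ f t k1 ≤ Nc γ f t k2 :=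
  Finset.card_le_card (Finset.monotone_filter_right _ fun c _ hc => le_trans hc (hgt_mono c h))

lemma Nc_zero (t k : ℕ) : Nc γ f (t + 1) 0 = 0 := by
  simp [Nc, hgt_zero]

lemma Nc_le_rowLen (i k : ℕ) : Nc γ f (i + 1) k ≤ γ.rowLen i := by
  rw [Nc, ← Finset.card_range (γ.rowLen i)]
  apply Finset.card_le_card
  intro c hc
  rw [Finset.mem_filter] at hc
  rw [Finset.mem_range, ← YoungDiagram.mem_iff_lt_rowLen]
  rw [YoungDiagram.mem_iff_lt_colLen]
  exact lt_of_lt_of_le (Nat.lt_of_lt_of_le (Nat.lt_succ_self i) hc.2) (hgt_le c k)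


lemma hgt_succ_le
    (hcol : ∀ i1 i2 j, (i1, j) ∈ γ → (i2, j) ∈ γ → f i1 j = f i2 j → i1 = i2)
    (c k : ℕ) : hgt γ f c (k + 1) ≤ hgt γ f c k + 1 := by
  have hsub : (Finset.range (γ.colLen c)).filter (fun i => f i c < k + 1) ⊆
      ((Finset.range (γ.colLen c)).filter fun i => f i c < k) ∪
      ((Finset.range (γ.colLen c)).filter fun i => f i c = k) := by
    intro i hi
    rw [Finset.mem_filter] at hi
    rcases Nat.lt_succ_iff_lt_or_eq.mp hi.2 with h | h
    · exact Finset.mem_union_left _ (Finset.mem_filter.mpr ⟨hi.1, h⟩)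
    · exact Finset.mem_union_right _ (Finset.mem_filter.mpr ⟨hi.1, h⟩)
  have hone : ((Finset.range (γ.colLen c)).filter fun i => f i c = k).card ≤ 1 := by
    apply Finset.card_le_one.mpr
    intro a ha b hb
    rw [Finset.mem_filter, Finset.mem_range] at ha hb
    exact hcol a b c (YoungDiagram.mem_iff_lt_colLen.mpr ha.1)
      (YoungDiagram.mem_iff_lt_colLen.mpr hb.1) (ha.2.trans hb.2.symm)
  calc hgt γ f c (k + 1) ≤ _ := Finset.card_le_card hsub
    _ ≤ _ + _ := Finset.card_union_le _ _
    _ ≤ hgt γ f c k + 1 := Nat.add_le_add_left hone _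

lemma Nc_succ_le
    (hcol : ∀ i1 i2 j, (i1, j) ∈ γ → (i2, j) ∈ γ → f i1 j = f i2 j → i1 = i2)
    (t k : ℕ) : Nc γ f (t + 1) (k + 1) ≤ Nc γ f t k := by
  apply Finset.card_le_card
  apply Finset.monotone_filter_right
  intro c _ hc
  have := le_trans hc (hgt_succ_le hcol c k)
  omega

lemma Nc_big (hbound : ∀ i j, (i, j) ∈ γ → f i j < n)
    {i j : ℕ} (hij : (i, j) ∈ γ) : j < Nc γ f (i + 1) n := by
  have hsub : Finset.range (j + 1) ⊆
      (Finset.range (γ.rowLen 0)).filter fun c => i + 1 ≤ hgt γ f c n := by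
    intro c hc
    rw [Finset.mem_range] at hc
    have hcj : c ≤ j := Nat.lt_succ_iff.mp hc
    have hmem : (i, c) ∈ γ := γ.up_left_mem le_rfl hcj hij
    have h1 : i < γ.colLen c := YoungDiagram.mem_iff_lt_colLen.mp hmem
    have hfull : hgt γ f c n = γ.colLen c := by
      rw [hgt]
      rw [Finset.filter_true_of_mem, Finset.card_range]
      intro x hx
      exact hbound x c (YoungDiagram.mem_iff_lt_colLen.mpr (Finset.mem_range.mp hx))
    rw [Finset.mem_filter, Finset.mem_range]
    constructor
    · rw [← YoungDiagram.mem_iff_lt_rowLen]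
      exact γ.up_left_mem (Nat.zero_le i) le_rfl hmem
    · omega
  calc j < j + 1 := Nat.lt_succ_self j
    _ = (Finset.range (j+1)).card := (Finset.card_range _).symm
    _ ≤ _ := Finset.card_le_card hsub


lemma mem_filter_range_iff_lt_card {n : ℕ} {P : ℕ → Prop} [DecidablePred P]
    (hP : ∀ {a b : ℕ}, a ≤ b → P b → P a) (k : ℕ) :
    k ∈ (Finset.range n).filter P ↔ k < ((Finset.range n).filter P).card := by
  constructor
  · intro hk
    by_contra hlt
    push_neg at hlt
    have hsub : Finset.range (k + 1) ⊆ (Finset.range n).filter P := by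
      intro a ha
      rw [Finset.mem_range] at ha
      rw [Finset.mem_filter] at hk ⊢
      rw [Finset.mem_range] at hk ⊢
      exact ⟨lt_of_le_of_lt (Nat.lt_succ_iff.mp ha) hk.1,
        hP (Nat.lt_succ_iff.mp ha) hk.2⟩
    have := Finset.card_le_card hsub
    rw [Finset.card_range] at this
    omega
  · intro hk
    by_contra hmem
    have hsub : (Finset.range n).filter P ⊆ Finset.range k := by
      intro a ha
      rw [Finset.mem_range]
      by_contra hka
      push_neg at hka
      apply hmem
      rw [Finset.mem_filter] at ha ⊢
      rw [Finset.mem_range] at ha ⊢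
      refine ⟨?_, hP hka ha.2⟩
      have := Finset.card_filter_le (Finset.range n) P
      rw [Finset.card_range] at this
      omega
    have := Finset.card_le_card hsub
    rw [Finset.card_range] at this
    omega

variable (γ f) in
/-- the entry at cell `(i,j)` of the semistandard tableau built from the filling `f`. -/
noncomputable def Dv (n i j : ℕ) : ℕ :=
  ((Finset.range n).filter fun k => Nc γ f (i + 1) (k + 1) ≤ j).card

lemma mem_iff_lt_Dv {n i j : ℕ} (k : ℕ) :
    k ∈ (Finset.range n).filter (fun k => Nc γ f (i + 1) (k + 1) ≤ j) ↔ k < Dv γ f n i j :=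
  mem_filter_range_iff_lt_card (fun hab hb => le_trans (Nc_mono _ (by omega)) hb) k

lemma lt_Dv_iff {n i j : ℕ} (k : ℕ) :
    k < Dv γ f n i j ↔ (k < n ∧ Nc γ f (i + 1) (k + 1) ≤ j) := by
  rw [← mem_iff_lt_Dv, Finset.mem_filter, Finset.mem_range]

lemma Dv_le (n i j : ℕ) : Dv γ f n i j ≤ n :=
  le_trans (Finset.card_filter_le _ _) (le_of_eq (Finset.card_range _))

lemma Dv_lt_n (hbound : ∀ i j, (i, j) ∈ γ → f i j < n)
    {i j : ℕ} (hij : (i, j) ∈ γ) : Dv γ f n i j < n := by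
  have hD := Dv_le (γ := γ) (f := f) n i j
  rcases Nat.lt_or_ge (Dv γ f n i j) n with h | h
  · exact h
  · exfalso
    have hn : 0 < n := lt_of_le_of_lt (Nat.zero_le _) (hbound i j hij)
    have : n - 1 < Dv γ f n i j := by omega
    rw [lt_Dv_iff] at this
    have hb := Nc_big hbound hij
    have h2 : Nc γ f (i+1) (n - 1 + 1) ≤ j := this.2
    have hkk : n - 1 + 1 = n := by omega
    rw [hkk] at h2
    omega

lemma Dv_row_weak {n : ℕ} (i : ℕ) {j1 j2 : ℕ} (h : j1 ≤ j2) :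
    Dv γ f n i j1 ≤ Dv γ f n i j2 :=
  Finset.card_le_card (Finset.monotone_filter_right _ fun k _ hk => le_trans hk h)

lemma Dv_eq_iff {n : ℕ} (hbound : ∀ i j, (i, j) ∈ γ → f i j < n) {i j k : ℕ} (hk : k < n) :
    Dv γ f n i j = k ↔ (Nc γ f (i + 1) k ≤ j ∧ j < Nc γ f (i + 1) (k + 1)) := by
  constructor
  · intro hD
    constructor
    · rcases Nat.eq_zero_or_pos k with h0 | h0
      · subst h0
        simp [Nc, hgt_zero]
      · have : k - 1 < Dv γ f n i j := by omega
        rw [lt_Dv_iff] at this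
        have := this.2
        have hkk : k - 1 + 1 = k := by omega
        rwa [hkk] at this
    · have : ¬ (k < Dv γ f n i j) := by omega
      rw [lt_Dv_iff] at this
      push_neg at this
      exact this hk
  · rintro ⟨h1, h2⟩
    have hub : Dv γ f n i j ≤ k := by
      by_contra hc
      push_neg at hc
      rw [lt_Dv_iff] at hc
      omega
    have hlb : k ≤ Dv γ f n i j := by
      by_contra hc
      push_neg at hc
      have hnot : ¬ (Dv γ f n i j < Dv γ f n i j) := lt_irrefl _
      rw [lt_Dv_iff] at hnot
      push_neg at hnot
      have hj := hnot (by omega)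
      have := Nc_mono (γ := γ) (f := f) (i + 1) (by omega : Dv γ f n i j + 1 ≤ k)
      omega
    omega


lemma mem_of_lt_Nc {i j k : ℕ} (h : j < Nc γ f (i + 1) (k + 1)) : (i, j) ∈ γ := by
  rw [YoungDiagram.mem_iff_lt_rowLen]
  exact lt_of_lt_of_le h (Nc_le_rowLen i (k + 1))

lemma Dv_col_strict_step {n : ℕ}
    (hbound : ∀ i j, (i, j) ∈ γ → f i j < n)
    (hcol : ∀ i1 i2 j, (i1, j) ∈ γ → (i2, j) ∈ γ → f i1 j = f i2 j → i1 = i2)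
    {i j : ℕ} (hij : (i + 1, j) ∈ γ) : Dv γ f n i j < Dv γ f n (i + 1) j := by
  set K := Dv γ f n (i + 1) j with hK
  have hKn : K < n := Dv_lt_n hbound hij
  have hch := (Dv_eq_iff hbound hKn).mp hK.symm
  have hjK : j < Nc γ f (i + 1) K :=
    lt_of_lt_of_le hch.2 (Nc_succ_le hcol (i + 1) K)
  have hK0 : 0 < K := by
    rcases Nat.eq_zero_or_pos K with h0 | h0
    · exfalso
      rw [h0] at hjK
      have : Nc γ f (i + 1) 0 = 0 := by simp [Nc, hgt_zero]
      omega
    · exact h0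
  have hsub : ∀ k, k < Dv γ f n i j → k < K - 1 := by
    intro k hk
    rw [lt_Dv_iff] at hk
    have h2 := hk.2
    by_contra hc
    push_neg at hc
    have := Nc_mono (γ := γ) (f := f) (i + 1) (by omega : K ≤ k + 1)
    omega
  rcases Nat.eq_zero_or_pos (Dv γ f n i j) with h0 | h0
  · omega
  · have := hsub (Dv γ f n i j - 1) (by omega)
    omega

lemma Dv_col_strict {n : ℕ}
    (hbound : ∀ i j, (i, j) ∈ γ → f i j < n)
    (hcol : ∀ i1 i2 j, (i1, j) ∈ γ → (i2, j) ∈ γ → f i1 j = f i2 j → i1 = i2)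
    {i1 i2 j : ℕ} (h : i1 < i2) (hij : (i2, j) ∈ γ) : Dv γ f n i1 j < Dv γ f n i2 j := by
  induction i2 with
  | zero => omega
  | succ i ih =>
    rcases Nat.lt_succ_iff_lt_or_eq.mp h with h' | h'
    · have hmem : (i, j) ∈ γ := γ.up_left_mem (Nat.le_succ i) le_rfl hij
      exact lt_trans (ih h' hmem) (Dv_col_strict_step hbound hcol hij)
    · rw [h']
      exact Dv_col_strict_step hbound hcol (h' ▸ hij)


lemma sum_Nc (k : ℕ) :
    ∑ i ∈ Finset.range (γ.colLen 0), Nc γ f (i + 1) k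
      = ∑ c ∈ Finset.range (γ.rowLen 0), hgt γ f c k := by
  unfold Nc
  simp only [Finset.card_filter]
  rw [Finset.sum_comm]
  apply Finset.sum_congr rfl
  intro c _
  have hle : hgt γ f c k ≤ γ.colLen 0 :=
    le_trans (hgt_le c k) (γ.colLen_anti 0 c (Nat.zero_le c))
  rw [← Finset.card_filter]
  have heq : (Finset.range (γ.colLen 0)).filter (fun i => i + 1 ≤ hgt γ f c k)
      = Finset.range (hgt γ f c k) := by
    ext i
    simp only [Finset.mem_filter, Finset.mem_range]
    omega
  rw [heq, Finset.card_range]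

lemma hgt_succ_eq (c k : ℕ) : hgt γ f c (k + 1)
    = hgt γ f c k + ((Finset.range (γ.colLen c)).filter fun i => f i c = k).card := by
  unfold hgt
  have h1 : (Finset.range (γ.colLen c)).filter (fun i => f i c < k + 1)
      = ((Finset.range (γ.colLen c)).filter fun i => f i c < k)
        ∪ ((Finset.range (γ.colLen c)).filter fun i => f i c = k) := by
    ext i
    simp only [Finset.mem_filter, Finset.mem_union, Finset.mem_range]
    omega
  rw [h1, Finset.card_union_of_disjoint]
  rw [Finset.disjoint_left]
  intro a ha hb
  rw [Finset.mem_filter] at ha hb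
  omega

lemma cells_filter_card (P : ℕ → ℕ → Prop) [∀ i j, Decidable (P i j)] :
    (γ.cells.filter fun c => P c.1 c.2).card
      = ∑ c ∈ Finset.range (γ.rowLen 0),
          ((Finset.range (γ.colLen c)).filter fun i => P i c).card := by
  have hset : γ.cells.filter (fun c => P c.1 c.2)
      = (Finset.range (γ.rowLen 0)).biUnion
          (fun c => ((Finset.range (γ.colLen c)).filter fun i => P i c).image
            fun i => (i, c)) := by
    ext x
    obtain ⟨i, c⟩ := x
    simp only [Finset.mem_filter, Finset.mem_biUnion, Finset.mem_range, Finset.mem_image,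
      YoungDiagram.mem_cells]
    constructor
    · rintro ⟨hmem, hP⟩
      refine ⟨c, ?_, i, ⟨⟨YoungDiagram.mem_iff_lt_colLen.mp hmem, hP⟩, rfl⟩⟩
      calc c < γ.rowLen i := YoungDiagram.mem_iff_lt_rowLen.mp hmem
        _ ≤ γ.rowLen 0 := γ.rowLen_anti 0 i (Nat.zero_le i)
    · rintro ⟨c', _, i', ⟨hi', hP⟩, heq⟩
      rw [Prod.mk.injEq] at heq
      obtain ⟨rfl, rfl⟩ := heq
      exact ⟨YoungDiagram.mem_iff_lt_colLen.mpr hi', hP⟩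
  rw [hset, Finset.card_biUnion]
  · apply Finset.sum_congr rfl
    intro c _
    apply Finset.card_image_of_injective
    intro a b hab
    rw [Prod.mk.injEq] at hab
    exact hab.1
  · intro x _ y _ hxy
    rw [Function.onFun, Finset.disjoint_left]
    intro a ha hb
    simp only [Finset.mem_image] at ha hb
    obtain ⟨i1, _, rfl⟩ := ha
    obtain ⟨i2, _, heq⟩ := hb
    rw [Prod.mk.injEq] at heq
    exact hxy heq.2.symm

lemma count_Dv {n : ℕ} (hbound : ∀ i j, (i, j) ∈ γ → f i j < n) {k : ℕ} (hk : k < n) :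
    (γ.cells.filter fun c => Dv γ f n c.1 c.2 = k).card
      = ∑ i ∈ Finset.range (γ.colLen 0),
          (Nc γ f (i + 1) (k + 1) - Nc γ f (i + 1) k) := by
  have hset : γ.cells.filter (fun c => Dv γ f n c.1 c.2 = k)
      = (Finset.range (γ.colLen 0)).biUnion
          (fun i => (Finset.Ico (Nc γ f (i + 1) k) (Nc γ f (i + 1) (k + 1))).image
            fun j => (i, j)) := by
    ext x
    obtain ⟨i, j⟩ := x
    simp only [Finset.mem_filter, Finset.mem_biUnion, Finset.mem_range, Finset.mem_image,
      Finset.mem_Ico, YoungDiagram.mem_cells]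
    constructor
    · rintro ⟨hmem, hD⟩
      have hch := (Dv_eq_iff hbound hk).mp hD
      refine ⟨i, ?_, j, ⟨hch.1, hch.2⟩, rfl⟩
      calc i < γ.colLen j := YoungDiagram.mem_iff_lt_colLen.mp hmem
        _ ≤ γ.colLen 0 := γ.colLen_anti 0 j (Nat.zero_le j)
    · rintro ⟨i', _, j', ⟨h1, h2⟩, heq⟩
      rw [Prod.mk.injEq] at heq
      obtain ⟨rfl, rfl⟩ := heq
      exact ⟨mem_of_lt_Nc h2, (Dv_eq_iff hbound hk).mpr ⟨h1, h2⟩⟩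
  rw [hset, Finset.card_biUnion]
  · apply Finset.sum_congr rfl
    intro i _
    rw [Finset.card_image_of_injective, Nat.card_Ico]
    intro a b hab
    rw [Prod.mk.injEq] at hab
    exact hab.2
  · intro x _ y _ hxy
    rw [Function.onFun, Finset.disjoint_left]
    intro a ha hb
    simp only [Finset.mem_image] at ha hb
    obtain ⟨i1, _, rfl⟩ := ha
    obtain ⟨i2, _, heq⟩ := hb
    rw [Prod.mk.injEq] at heq
    exact hxy heq.1.symm

lemma content_Dv {n : ℕ} (hbound : ∀ i j, (i, j) ∈ γ → f i j < n) {k : ℕ} (hk : k < n) :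
    (γ.cells.filter fun c => Dv γ f n c.1 c.2 = k).card
      = (γ.cells.filter fun c => f c.1 c.2 = k).card := by
  rw [count_Dv hbound hk, cells_filter_card (γ := γ) (fun i j => f i j = k)]
  rw [Finset.sum_tsub_distrib _ (fun i _ => Nc_mono (i + 1) (Nat.le_succ k))]
  rw [sum_Nc, sum_Nc]
  have : ∑ c ∈ Finset.range (γ.rowLen 0), hgt γ f c (k + 1)
      = ∑ c ∈ Finset.range (γ.rowLen 0), hgt γ f c k
        + ∑ c ∈ Finset.range (γ.rowLen 0),
            ((Finset.range (γ.colLen c)).filter fun i => f i c = k).card := by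
    rw [← Finset.sum_add_distrib]
    exact Finset.sum_congr rfl fun c _ => hgt_succ_eq c k
  simp only [Nat.succ_eq_add_one] at this ⊢
  omega


lemma exists_ssyt {n : ℕ} (μ : Fin n → ℕ)
    (hbound : ∀ i j, (i, j) ∈ γ → f i j < n)
    (hcol : ∀ i1 i2 j, (i1, j) ∈ γ → (i2, j) ∈ γ → f i1 j = f i2 j → i1 = i2)
    (hcontent : ∀ j : Fin n, (γ.cells.filter fun c => f c.1 c.2 = (j : ℕ)).card = μ j) :
    ∃ T : SemistandardYoungTableau γ, (∀ c ∈ γ.cells, T c.1 c.2 < n) ∧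
      ∀ j : Fin n, (γ.cells.filter fun c => T c.1 c.2 = (j : ℕ)).card = μ j := by
  refine ⟨⟨fun i j => if (i, j) ∈ γ then Dv γ f n i j else 0, ?_, ?_, ?_⟩, ?_, ?_⟩
  · intro i j1 j2 hj h2
    have h1 : (i, j1) ∈ γ := γ.up_left_mem le_rfl (le_of_lt hj) h2
    rw [if_pos h1, if_pos h2]
    exact Dv_row_weak i (le_of_lt hj)
  · intro i1 i2 j hi h2
    have h1 : (i1, j) ∈ γ := γ.up_left_mem (le_of_lt hi) le_rfl h2
    rw [if_pos h1, if_pos h2]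
    exact Dv_col_strict hbound hcol hi h2
  · intro i j hij
    rw [if_neg hij]
  · intro c hc
    rw [YoungDiagram.mem_cells] at hc
    have hc' : (c.1, c.2) ∈ γ := by rwa [Prod.mk.eta]
    show (if (c.1, c.2) ∈ γ then Dv γ f n c.1 c.2 else 0) < n
    rw [if_pos hc']
    exact Dv_lt_n hbound hc'
  · intro j
    have hset : (γ.cells.filter fun c =>
          (if (c.1, c.2) ∈ γ then Dv γ f n c.1 c.2 else 0) = (j : ℕ))
        = γ.cells.filter fun c => Dv γ f n c.1 c.2 = (j : ℕ) := by
      apply Finset.filter_congr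
      intro c hc
      rw [YoungDiagram.mem_cells] at hc
      have hc' : (c.1, c.2) ∈ γ := by rwa [Prod.mk.eta]
      rw [if_pos hc']
    show (γ.cells.filter fun c =>
        (if (c.1, c.2) ∈ γ then Dv γ f n c.1 c.2 else 0) = (j : ℕ)).card = μ j
    rw [hset, content_Dv hbound j.isLt, hcontent j]


lemma finite_kostka (γ : YoungDiagram) (n : ℕ) (μ : Fin n → ℕ) :
    Finite {T : SemistandardYoungTableau γ //
      (∀ c ∈ γ.cells, T c.1 c.2 < n) ∧
      ∀ j : Fin n, (γ.cells.filter fun c => T c.1 c.2 = (j : ℕ)).card = μ j} := by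
  apply Finite.of_injective
    (f := fun T : {T : SemistandardYoungTableau γ //
      (∀ c ∈ γ.cells, T c.1 c.2 < n) ∧
      ∀ j : Fin n, (γ.cells.filter fun c => T c.1 c.2 = (j : ℕ)).card = μ j} =>
      (fun c : γ.cells => (⟨T.1 c.1.1 c.1.2, T.2.1 c.1 c.2⟩ : Fin n)))
  intro T1 T2 h
  apply Subtype.ext
  apply SemistandardYoungTableau.ext
  intro i j
  by_cases hm : (i, j) ∈ γ
  · have hc : (i, j) ∈ γ.cells := (YoungDiagram.mem_cells (μ := γ) _).mpr hm
    have := congrFun h ⟨(i, j), hc⟩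
    exact congrArg Fin.val this
  · rw [T1.1.zeros hm, T2.1.zeros hm]

lemma exists_pair (γ : YoungDiagram) {n : ℕ} (μ : Fin n → ℕ) (I : Fin γ.card → Fin n)
    (hIμ : ∀ j : Fin n, (Finset.univ.filter fun r => I r = j).card = μ j)
    (hK : kostkaNumber γ n μ = 0) (w : Equiv.Perm (Fin γ.card)) :
    ∃ r s : Fin γ.card, r ≠ s ∧
      (γ.cells.equivFin.symm r).1.2 = (γ.cells.equivFin.symm s).1.2 ∧ I (w r) = I (w s) := by
  by_contra hcon
  push_neg at hcon
  set f : ℕ → ℕ → ℕ := fun i j =>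
    if h : (i, j) ∈ γ then (I (w (γ.cells.equivFin ⟨(i, j), (YoungDiagram.mem_cells (μ := γ) _).mpr h⟩)) : ℕ)
    else 0 with hf
  have hbound : ∀ i j, (i, j) ∈ γ → f i j < n := by
    intro i j h
    rw [hf]
    simp only [dif_pos h]
    exact (I _).isLt
  have hcol : ∀ i1 i2 j, (i1, j) ∈ γ → (i2, j) ∈ γ → f i1 j = f i2 j → i1 = i2 := by
    intro i1 i2 j h1 h2 heq
    by_contra hne
    rw [hf] at heq
    simp only [dif_pos h1, dif_pos h2] at heq
    set r := γ.cells.equivFin ⟨(i1, j), (YoungDiagram.mem_cells (μ := γ) _).mpr h1⟩ with hr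
    set s := γ.cells.equivFin ⟨(i2, j), (YoungDiagram.mem_cells (μ := γ) _).mpr h2⟩ with hs
    have hIrs : I (w r) = I (w s) := Fin.ext heq
    have hrs : r ≠ s := by
      intro hreq
      apply hne
      have := γ.cells.equivFin.injective (hr ▸ hs ▸ hreq)
      have := congrArg (fun x => x.1.1) this
      exact this
    have hcol2 : (γ.cells.equivFin.symm r).1.2 = (γ.cells.equivFin.symm s).1.2 := by
      rw [hr, hs, Equiv.symm_apply_apply, Equiv.symm_apply_apply]
    exact hcon r s hrs hcol2 hIrs
  have hcontent : ∀ j : Fin n, (γ.cells.filter fun c => f c.1 c.2 = (j : ℕ)).card = μ j := by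
    intro j
    have step1 : (γ.cells.filter fun c => f c.1 c.2 = (j : ℕ)).card
        = (Finset.univ.filter fun x : Fin γ.card => I (w x) = j).card := by
      apply Finset.card_bij (fun c hc =>
        γ.cells.equivFin ⟨c, (Finset.mem_filter.mp hc).1⟩)
      · intro c hc
        rw [Finset.mem_filter] at hc ⊢
        refine ⟨Finset.mem_univ _, ?_⟩
        obtain ⟨hc1, hc2⟩ := hc
        have hmem : (c.1, c.2) ∈ γ := by
          rw [Prod.mk.eta]
          exact (YoungDiagram.mem_cells (μ := γ) _).mp hc1
        rw [hf] at hc2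
        simp only [dif_pos hmem] at hc2
        have hsub : (⟨(c.1, c.2), (YoungDiagram.mem_cells (μ := γ) _).mpr hmem⟩ : {x // x ∈ γ.cells})
            = ⟨c, hc1⟩ := Subtype.ext (Prod.mk.eta)
        rw [hsub] at hc2
        exact Fin.ext hc2
      · intro a ha b hb heq
        have := γ.cells.equivFin.injective heq
        exact congrArg Subtype.val this
      · intro x hx
        rw [Finset.mem_filter] at hx
        refine ⟨(γ.cells.equivFin.symm x).1, ?_, ?_⟩
        · rw [Finset.mem_filter]
          refine ⟨(γ.cells.equivFin.symm x).2, ?_⟩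
          have hmem : ((γ.cells.equivFin.symm x).1.1, (γ.cells.equivFin.symm x).1.2) ∈ γ := by
            rw [Prod.mk.eta]
            exact (YoungDiagram.mem_cells (μ := γ) _).mp (γ.cells.equivFin.symm x).2
          rw [hf]
          simp only [dif_pos hmem]
          have hsub : (⟨((γ.cells.equivFin.symm x).1.1, (γ.cells.equivFin.symm x).1.2),
              (YoungDiagram.mem_cells (μ := γ) _).mpr hmem⟩ : {c // c ∈ γ.cells})
              = γ.cells.equivFin.symm x := Subtype.ext (Prod.mk.eta)
          rw [hsub, Equiv.apply_symm_apply]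
          exact congrArg Fin.val hx.2
        · have hsub : (⟨(γ.cells.equivFin.symm x).1, (γ.cells.equivFin.symm x).2⟩
              : {c // c ∈ γ.cells}) = γ.cells.equivFin.symm x := Subtype.ext rfl
          rw [hsub, Equiv.apply_symm_apply]
    have step2 : (Finset.univ.filter fun x : Fin γ.card => I (w x) = j).card
        = (Finset.univ.filter fun r : Fin γ.card => I r = j).card := by
      apply Finset.card_bij (fun x _ => w x)
      · intro x hx
        rw [Finset.mem_filter] at hx ⊢
        exact ⟨Finset.mem_univ _, hx.2⟩
      · intro a _ b _ heq
        exact w.injective heq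
      · intro r hr
        rw [Finset.mem_filter] at hr
        exact ⟨w⁻¹ r, Finset.mem_filter.mpr ⟨Finset.mem_univ _, by simpa using hr.2⟩,
          by simp⟩
    rw [step1, step2, hIμ j]
  obtain ⟨T, hT1, hT2⟩ := exists_ssyt μ hbound hcol hcontent
  have hfin := finite_kostka γ n μ
  have hne : Nat.card {T : SemistandardYoungTableau γ //
      (∀ c ∈ γ.cells, T c.1 c.2 < n) ∧
      ∀ j : Fin n, (γ.cells.filter fun c => T c.1 c.2 = (j : ℕ)).card = μ j} ≠ 0 :=
    Nat.card_ne_zero.mpr ⟨⟨⟨T, hT1, hT2⟩⟩, hfin⟩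
  exact hne hK


section Algebra

variable (γ : YoungDiagram) {n : ℕ} (I : Fin γ.card → Fin n)

/-- the signed sum of column-preserving permutations. -/
noncomputable def Nalg : MonoidAlgebra ℂ (Equiv.Perm (Fin γ.card)) :=
  ∑ τ : Equiv.Perm (Fin γ.card),
    if ∀ r, (γ.cells.equivFin.symm (τ r)).1.2 = (γ.cells.equivFin.symm r).1.2 then
      MonoidAlgebra.single τ (((Equiv.Perm.sign τ : ℤ) : ℂ))
    else 0

/-- the sum of row-preserving permutations. -/
noncomputable def Palg : MonoidAlgebra ℂ (Equiv.Perm (Fin γ.card)) :=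
  ∑ τ : Equiv.Perm (Fin γ.card),
    if ∀ r, (γ.cells.equivFin.symm (τ r)).1.1 = (γ.cells.equivFin.symm r).1.1 then
      MonoidAlgebra.single τ (1 : ℂ)
    else 0

lemma ys_eq : youngSymmetrizer γ = Palg γ * Nalg γ := rfl

/-- the sum of the permutations stabilizing `I`. -/
noncomputable def eH : MonoidAlgebra ℂ (Equiv.Perm (Fin γ.card)) :=
  ∑ h : Equiv.Perm (Fin γ.card),
    if ∀ r, I (h r) = I r then MonoidAlgebra.single h (1 : ℂ) else 0

variable {γ I}

lemma colp_inv {t : Equiv.Perm (Fin γ.card)}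
    (ht : ∀ r, (γ.cells.equivFin.symm (t r)).1.2 = (γ.cells.equivFin.symm r).1.2) (r) :
    (γ.cells.equivFin.symm (t⁻¹ r)).1.2 = (γ.cells.equivFin.symm r).1.2 := by
  have := ht (t⁻¹ r)
  rw [Equiv.Perm.apply_inv_self] at this
  exact this.symm

lemma colp_mul {t τ : Equiv.Perm (Fin γ.card)}
    (ht : ∀ r, (γ.cells.equivFin.symm (t r)).1.2 = (γ.cells.equivFin.symm r).1.2)
    (hτ : ∀ r, (γ.cells.equivFin.symm (τ r)).1.2 = (γ.cells.equivFin.symm r).1.2) (r) :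
    (γ.cells.equivFin.symm ((t * τ) r)).1.2 = (γ.cells.equivFin.symm r).1.2 := by
  rw [Equiv.Perm.mul_apply]
  rw [ht (τ r)]
  exact hτ r

lemma single_mul_Nalg {t : Equiv.Perm (Fin γ.card)}
    (ht : ∀ r, (γ.cells.equivFin.symm (t r)).1.2 = (γ.cells.equivFin.symm r).1.2) :
    MonoidAlgebra.single t (1 : ℂ) * Nalg γ
      = ((Equiv.Perm.sign t : ℤ) : ℂ) • Nalg γ := by
  rw [Nalg, Finset.mul_sum, Finset.smul_sum]
  apply Fintype.sum_equiv (Equiv.mulLeft t)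
  intro τ
  show _ = _ • (if ∀ r, (γ.cells.equivFin.symm ((t * τ) r)).1.2 = (γ.cells.equivFin.symm r).1.2
    then MonoidAlgebra.single (t * τ) (((Equiv.Perm.sign (t * τ) : ℤ) : ℂ)) else 0)
  by_cases h : ∀ r, (γ.cells.equivFin.symm (τ r)).1.2 = (γ.cells.equivFin.symm r).1.2
  · rw [if_pos h, if_pos (colp_mul ht h), MonoidAlgebra.single_mul_single, one_mul,
      MonoidAlgebra.smul_single']
    congr 1
    have hs : Equiv.Perm.sign (t * τ) = Equiv.Perm.sign t * Equiv.Perm.sign τ := map_mul _ _ _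
    rw [hs]
    push_cast
    rw [← mul_assoc]
    norm_cast
    rw [Int.units_mul_self, one_mul]
  · have h2 : ¬ ∀ r, (γ.cells.equivFin.symm ((t * τ) r)).1.2
        = (γ.cells.equivFin.symm r).1.2 := by
      intro hc
      apply h
      intro r
      have := colp_mul (colp_inv ht) hc r
      rwa [inv_mul_cancel_left] at this
    rw [if_neg h, if_neg h2, mul_zero, smul_zero]

lemma Ip_inv {h : Equiv.Perm (Fin γ.card)} (hh : ∀ r, I (h r) = I r) (r) :
    I (h⁻¹ r) = I r := by
  have := hh (h⁻¹ r)
  rw [Equiv.Perm.apply_inv_self] at this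
  exact this.symm

lemma eH_mul_single {h : Equiv.Perm (Fin γ.card)} (hh : ∀ r, I (h r) = I r) :
    eH γ I * MonoidAlgebra.single h (1 : ℂ) = eH γ I := by
  rw [eH, Finset.sum_mul]
  apply Fintype.sum_equiv (Equiv.mulRight h)
  intro τ
  show _ = if ∀ r, I ((τ * h) r) = I r then MonoidAlgebra.single (τ * h) (1 : ℂ) else 0
  by_cases hτ : ∀ r, I (τ r) = I r
  · have hτh : ∀ r, I ((τ * h) r) = I r := by
      intro r
      rw [Equiv.Perm.mul_apply, hτ (h r), hh r]
    rw [if_pos hτ, if_pos hτh, MonoidAlgebra.single_mul_single, one_mul]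
  · have hτh : ¬ ∀ r, I ((τ * h) r) = I r := by
      intro hc
      apply hτ
      intro r
      have := hc (h⁻¹ r)
      rw [Equiv.Perm.mul_apply, Equiv.Perm.apply_inv_self] at this
      rw [this, Ip_inv hh]
    rw [if_neg hτ, if_neg hτh, zero_mul]

lemma eH_single_mul_Nalg
    (hex : ∀ w : Equiv.Perm (Fin γ.card), ∃ r s : Fin γ.card, r ≠ s ∧
      (γ.cells.equivFin.symm r).1.2 = (γ.cells.equivFin.symm s).1.2 ∧ I (w r) = I (w s))
    (w : Equiv.Perm (Fin γ.card)) :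
    eH γ I * MonoidAlgebra.single w (1 : ℂ) * Nalg γ = 0 := by
  obtain ⟨r, s, hrs, hcol, hIw⟩ := hex w
  set t : Equiv.Perm (Fin γ.card) := Equiv.swap r s with htdef
  have ht : ∀ x, (γ.cells.equivFin.symm (t x)).1.2 = (γ.cells.equivFin.symm x).1.2 := by
    intro x
    rcases eq_or_ne x r with hx | hx
    · rw [hx, htdef, Equiv.swap_apply_left, ← hcol]
    · rcases eq_or_ne x s with hy | hy
      · rw [hy, htdef, Equiv.swap_apply_right, hcol]
      · rw [htdef, Equiv.swap_apply_of_ne_of_ne hx hy]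
  have hsign : ((Equiv.Perm.sign t : ℤ) : ℂ) = -1 := by
    rw [htdef, Equiv.Perm.sign_swap hrs]
    norm_num
  have hwt : ∀ x, I ((w * t * w⁻¹) x) = I x := by
    intro x
    rcases eq_or_ne (w⁻¹ x) r with hx | hx
    · have : (w * t * w⁻¹) x = w s := by
        simp only [Equiv.Perm.mul_apply, hx, htdef, Equiv.swap_apply_left]
      rw [this, ← hIw, ← hx, Equiv.Perm.apply_inv_self]
    · rcases eq_or_ne (w⁻¹ x) s with hy | hy
      · have : (w * t * w⁻¹) x = w r := by
          simp only [Equiv.Perm.mul_apply, hy, htdef, Equiv.swap_apply_right]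
        rw [this, hIw, ← hy, Equiv.Perm.apply_inv_self]
      · have : (w * t * w⁻¹) x = x := by
          simp only [Equiv.Perm.mul_apply, htdef, Equiv.swap_apply_of_ne_of_ne hx hy,
            Equiv.Perm.apply_inv_self]
        rw [this]
  have hNt : MonoidAlgebra.single t (1 : ℂ) * Nalg γ = -Nalg γ := by
    rw [single_mul_Nalg ht, hsign, neg_one_smul]
  have hN' : Nalg γ = -(MonoidAlgebra.single t (1 : ℂ) * Nalg γ) := by rw [hNt, neg_neg]
  have hw : (w * t * w⁻¹) * w = w * t := by group
  have key : eH γ I * MonoidAlgebra.single w (1 : ℂ) * Nalg γ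
      = -(eH γ I * MonoidAlgebra.single w (1 : ℂ) * Nalg γ) := by
    nth_rewrite 1 [hN']
    calc eH γ I * MonoidAlgebra.single w (1:ℂ) * (-(MonoidAlgebra.single t (1:ℂ) * Nalg γ))
        = -(eH γ I * (MonoidAlgebra.single w (1:ℂ) * MonoidAlgebra.single t (1:ℂ)) * Nalg γ) := by
          noncomm_ring
      _ = -(eH γ I * MonoidAlgebra.single (w * t) (1:ℂ) * Nalg γ) := by
          rw [MonoidAlgebra.single_mul_single, one_mul]
      _ = -(eH γ I * MonoidAlgebra.single ((w * t * w⁻¹) * w) (1:ℂ) * Nalg γ) := by rw [hw]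
      _ = -(eH γ I * (MonoidAlgebra.single (w * t * w⁻¹) (1:ℂ)
            * MonoidAlgebra.single w (1:ℂ)) * Nalg γ) := by
          rw [MonoidAlgebra.single_mul_single, one_mul]
      _ = -((eH γ I * MonoidAlgebra.single (w * t * w⁻¹) (1:ℂ))
            * MonoidAlgebra.single w (1:ℂ) * Nalg γ) := by noncomm_ring
      _ = -(eH γ I * MonoidAlgebra.single w (1:ℂ) * Nalg γ) := by rw [eH_mul_single hwt]
  have h2 : (2 : ℂ) • (eH γ I * MonoidAlgebra.single w (1 : ℂ) * Nalg γ) = 0 := by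
    rw [two_smul]
    nth_rewrite 1 [key]
    rw [neg_add_cancel]
  have := smul_eq_zero.mp h2
  rcases this with h | h
  · norm_num at h
  · exact h

lemma eH_mul_mul_Nalg
    (hex : ∀ w : Equiv.Perm (Fin γ.card), ∃ r s : Fin γ.card, r ≠ s ∧
      (γ.cells.equivFin.symm r).1.2 = (γ.cells.equivFin.symm s).1.2 ∧ I (w r) = I (w s))
    (z : MonoidAlgebra ℂ (Equiv.Perm (Fin γ.card))) :
    eH γ I * z * Nalg γ = 0 := by
  have h0 : (LinearMap.mulRight ℂ (Nalg γ)).comp (LinearMap.mulLeft ℂ (eH γ I))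
      = (0 : MonoidAlgebra ℂ (Equiv.Perm (Fin γ.card))
          →ₗ[ℂ] MonoidAlgebra ℂ (Equiv.Perm (Fin γ.card))) := by
    apply MonoidAlgebra.lhom_ext'
    intro w
    apply LinearMap.ext
    intro c
    simp only [LinearMap.comp_apply, MonoidAlgebra.lsingle_apply, LinearMap.mulLeft_apply,
      LinearMap.mulRight_apply, LinearMap.zero_apply]
    have hs : MonoidAlgebra.single w c = c • MonoidAlgebra.single w (1 : ℂ) := by
      rw [MonoidAlgebra.smul_single', mul_one]
    rw [hs, mul_smul_comm, smul_mul_assoc, eH_single_mul_Nalg hex w, smul_zero]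
  have := LinearMap.congr_fun h0 z
  simpa only [LinearMap.comp_apply, LinearMap.mulLeft_apply, LinearMap.mulRight_apply,
    LinearMap.zero_apply] using this

variable (γ I) in
/-- the permutations stabilizing `I`, as a finset. -/
noncomputable def HF : Finset (Equiv.Perm (Fin γ.card)) :=
  Finset.univ.filter fun h => ∀ r, I (h r) = I r

lemma eH_eq_sum : eH γ I = ∑ h ∈ HF γ I, MonoidAlgebra.single h (1 : ℂ) :=
  (Finset.sum_filter _ _).symm

lemma a_eq (σ : Equiv.Perm (Fin γ.card)) :
    eH γ I * MonoidAlgebra.single σ (1 : ℂ) * eH γ I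
      = ∑ p ∈ HF γ I ×ˢ HF γ I, MonoidAlgebra.single (p.1 * σ * p.2) (1 : ℂ) := by
  rw [eH_eq_sum, Finset.sum_product]
  rw [Finset.sum_mul, Finset.sum_mul]
  apply Finset.sum_congr rfl
  intro h1 _
  rw [MonoidAlgebra.single_mul_single, one_mul, Finset.mul_sum]
  apply Finset.sum_congr rfl
  intro h2 _
  rw [MonoidAlgebra.single_mul_single, one_mul]

lemma mulLeft_sum {ι : Type*} (s : Finset ι)
    (g : ι → MonoidAlgebra ℂ (Equiv.Perm (Fin γ.card))) :
    LinearMap.mulLeft ℂ (∑ p ∈ s, g p) = ∑ p ∈ s, LinearMap.mulLeft ℂ (g p) := by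
  apply LinearMap.ext
  intro x
  simp only [LinearMap.mulLeft_apply, LinearMap.sum_apply, Finset.sum_mul]

lemma sum_comp' {ι : Type*} (s : Finset ι)
    (g : ι → (MonoidAlgebra ℂ (Equiv.Perm (Fin γ.card))
      →ₗ[ℂ] MonoidAlgebra ℂ (Equiv.Perm (Fin γ.card))))
    (R : MonoidAlgebra ℂ (Equiv.Perm (Fin γ.card))
      →ₗ[ℂ] MonoidAlgebra ℂ (Equiv.Perm (Fin γ.card))) :
    (∑ p ∈ s, g p) ∘ₗ R = ∑ p ∈ s, (g p ∘ₗ R) := by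
  apply LinearMap.ext
  intro x
  simp only [LinearMap.comp_apply, LinearMap.sum_apply]

lemma sum_youngChar_eq_zero
    (hex : ∀ w : Equiv.Perm (Fin γ.card), ∃ r s : Fin γ.card, r ≠ s ∧
      (γ.cells.equivFin.symm r).1.2 = (γ.cells.equivFin.symm s).1.2 ∧ I (w r) = I (w s))
    (σ : Equiv.Perm (Fin γ.card)) :
    ∑ p ∈ HF γ I ×ˢ HF γ I, youngChar γ (p.1 * σ * p.2) = 0 := by
  have hys : (LinearMap.mulLeft ℂ (eH γ I * MonoidAlgebra.single σ (1 : ℂ) * eH γ I)).comp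
      (LinearMap.mulRight ℂ (youngSymmetrizer γ)) = 0 := by
    apply LinearMap.ext
    intro x
    simp only [LinearMap.comp_apply, LinearMap.mulLeft_apply, LinearMap.mulRight_apply,
      LinearMap.zero_apply]
    rw [ys_eq]
    have := eH_mul_mul_Nalg hex
      (MonoidAlgebra.single σ (1 : ℂ) * (eH γ I * (x * Palg γ)))
    simpa only [mul_assoc] using this
  have hchar : ∀ τ : Equiv.Perm (Fin γ.card), youngChar γ τ
      = ((Module.finrank ℂ
          (LinearMap.range (LinearMap.mulRight ℂ (youngSymmetrizer γ))) : ℂ) /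
          (Nat.factorial γ.card : ℂ))
        * LinearMap.trace ℂ _
          ((LinearMap.mulLeft ℂ (MonoidAlgebra.single τ (1 : ℂ))) ∘ₗ
            (LinearMap.mulRight ℂ (youngSymmetrizer γ))) := fun τ => rfl
  calc ∑ p ∈ HF γ I ×ˢ HF γ I, youngChar γ (p.1 * σ * p.2)
      = ((Module.finrank ℂ
          (LinearMap.range (LinearMap.mulRight ℂ (youngSymmetrizer γ))) : ℂ) /
          (Nat.factorial γ.card : ℂ))
        * ∑ p ∈ HF γ I ×ˢ HF γ I, LinearMap.trace ℂ _
            ((LinearMap.mulLeft ℂ (MonoidAlgebra.single (p.1 * σ * p.2) (1 : ℂ))) ∘ₗ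
              (LinearMap.mulRight ℂ (youngSymmetrizer γ))) := by
        rw [Finset.mul_sum]
        exact Finset.sum_congr rfl fun p _ => hchar _
    _ = 0 := by
        rw [← map_sum, ← sum_comp', ← mulLeft_sum, ← a_eq, hys, map_zero, mul_zero]

end Algebra

end ImmanantKostka

open ImmanantKostka in
theorem immanant_eq_zero_of_kostka_eq_zero (n : ℕ) (γ : YoungDiagram)
    (μ : Fin n → ℕ) (hμ : ∑ j, μ j = γ.card)
    (I : Fin γ.card → Fin n) (hI : Monotone I)
    (hIμ : ∀ j : Fin n, (Finset.univ.filter fun r => I r = j).card = μ j)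
    (A : Matrix (Fin n) (Fin n) ℂ)
    (hA : A.PosDef ∨
      ∃ B : Matrix (Fin n) (Fin n) ℝ, TotallyNonneg B ∧ B.det ≠ 0 ∧
        A = B.map Complex.ofReal)
    (hK : kostkaNumber γ n μ = 0) :
    immanant (youngChar γ) (A.submatrix I I) = 0 := by
  classical
  have hex := exists_pair γ μ I hIμ hK
  have hone : (1 : Equiv.Perm (Fin γ.card)) ∈ HF γ I := by
    rw [HF, Finset.mem_filter]
    exact ⟨Finset.mem_univ _, fun r => rfl⟩
  have hcard : ((HF γ I ×ˢ HF γ I).card : ℂ) ≠ 0 := by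
    rw [Finset.card_product]
    have := Finset.card_ne_zero_of_mem hone
    simp only [ne_eq, Nat.cast_mul, mul_eq_zero, Nat.cast_eq_zero]
    omega
  have hbi : ∀ p ∈ HF γ I ×ˢ HF γ I, ∀ σ : Equiv.Perm (Fin γ.card),
      (∏ i, A.submatrix I I ((p.1 * σ * p.2) i) i) = ∏ i, A.submatrix I I (σ i) i := by
    intro p hp σ
    rw [Finset.mem_product, HF, Finset.mem_filter, Finset.mem_filter] at hp
    obtain ⟨⟨-, hp1⟩, -, hp2⟩ := hp
    simp only [Matrix.submatrix_apply, Equiv.Perm.mul_apply]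
    calc ∏ i, A (I (p.1 (σ (p.2 i)))) (I i)
        = ∏ i, A (I (σ (p.2 i))) (I (p.2 i)) := by
          apply Finset.prod_congr rfl
          intro i _
          rw [hp1, hp2]
      _ = ∏ j, A (I (σ j)) (I j) := Equiv.prod_comp p.2 fun j => A (I (σ j)) (I j)
  have himm : ∀ p ∈ HF γ I ×ˢ HF γ I,
      immanant (youngChar γ) (A.submatrix I I)
        = ∑ σ : Equiv.Perm (Fin γ.card),
            youngChar γ (p.1 * σ * p.2) * ∏ i, A.submatrix I I (σ i) i := by
    intro p hp
    rw [immanant]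
    symm
    apply Fintype.sum_equiv ((Equiv.mulRight p.2).trans (Equiv.mulLeft p.1))
    intro σ
    have he : ((Equiv.mulRight p.2).trans (Equiv.mulLeft p.1)) σ = p.1 * σ * p.2 := by
      simp only [Equiv.trans_apply, Equiv.coe_mulRight, Equiv.coe_mulLeft]
      group
    rw [he]
    congr 1
    exact (hbi p hp σ).symm
  have hsum : ((HF γ I ×ˢ HF γ I).card : ℂ) • immanant (youngChar γ) (A.submatrix I I)
      = 0 := by
    have h1 : ∑ p ∈ HF γ I ×ˢ HF γ I, immanant (youngChar γ) (A.submatrix I I) = 0 := by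
      calc ∑ p ∈ HF γ I ×ˢ HF γ I, immanant (youngChar γ) (A.submatrix I I)
          = ∑ p ∈ HF γ I ×ˢ HF γ I, ∑ σ : Equiv.Perm (Fin γ.card),
              youngChar γ (p.1 * σ * p.2) * ∏ i, A.submatrix I I (σ i) i :=
            Finset.sum_congr rfl himm
        _ = ∑ σ : Equiv.Perm (Fin γ.card), ∑ p ∈ HF γ I ×ˢ HF γ I,
              youngChar γ (p.1 * σ * p.2) * ∏ i, A.submatrix I I (σ i) i :=
            Finset.sum_comm
        _ = ∑ σ : Equiv.Perm (Fin γ.card), (∑ p ∈ HF γ I ×ˢ HF γ I,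
              youngChar γ (p.1 * σ * p.2)) * ∏ i, A.submatrix I I (σ i) i := by
            apply Finset.sum_congr rfl
            intro σ _
            rw [Finset.sum_mul]
        _ = 0 := by
            apply Finset.sum_eq_zero
            intro σ _
            rw [sum_youngChar_eq_zero hex σ, zero_mul]
    rw [← h1, Finset.sum_const, ← Nat.cast_smul_eq_nsmul ℂ]
  have := smul_eq_zero.mp hsum
  rcases this with h | h
  · exact absurd h hcard
  · exact h
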